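/- arXiv:0810.5352 — 4 statements merged into one kernel-verified Lean document; each statement's English description precedes it below -/
import Mathlib

section
/- Let K be a compact Hausdorff space and let f : C(K) → ℂ be an entire function given by its everywhere-convergent Taylor series at zero, f(x) = ∑_{k=0}^∞ P_k(x), where each P_k is a continuous k-homogeneous polynomial on C(K). Then f is orthogonally additive if and only if every P_k is orthogonally additive. -/
open MeasureTheory Filter Topology

/-- Two elements of `C(K, ℂ)` are orthogonal when their pointwise product vanishes;
`f` is orthogonally additive when it is additive on orthogonal pairs. -/
def IsOrthAdd {K : Type*} [TopologicalSpace K] [CompactSpace K]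
    (f : C(K, ℂ) → ℂ) : Prop :=
  ∀ x y : C(K, ℂ), x * y = 0 → f (x + y) = f x + f y

/-- `P` is a continuous `k`-homogeneous polynomial on `C(K, ℂ)`:
`P x = M (x, …, x)` for some continuous `k`-linear map `M`. -/
def IsHomogPoly {K : Type*} [TopologicalSpace K] [CompactSpace K]
    (k : ℕ) (P : C(K, ℂ) → ℂ) : Prop :=
  ∃ M : ContinuousMultilinearMap ℂ (fun _ : Fin k => C(K, ℂ)) ℂ,
    ∀ x : C(K, ℂ), P x = M (fun _ => x)

/-- If the partial sums of a scalar power series tend to `0` at every point,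
then all coefficients vanish. -/
lemma coeff_eq_zero_of_tendsto_zero {a : ℕ → ℂ}
    (h : ∀ t : ℂ, Tendsto (fun n => ∑ j ∈ Finset.range n, a j * t ^ j) atTop (𝓝 0)) :
    ∀ j, a j = 0 := by
  set q : FormalMultilinearSeries ℂ ℂ ℂ := FormalMultilinearSeries.ofScalars ℂ a with hq
  have hqapp : ∀ (n : ℕ) (t : ℂ), (q n fun _ => t) = a n * t ^ n := by
    intro n t
    rw [hq, FormalMultilinearSeries.ofScalars_apply_eq, smul_eq_mul]
  -- the coefficients tend to 0, hence are bounded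
  have ha0 : Tendsto a atTop (𝓝 0) := by
    have h1 := h 1
    have h2 : Tendsto (fun n => (∑ j ∈ Finset.range (n + 1), a j * (1 : ℂ) ^ j)
        - ∑ j ∈ Finset.range n, a j * (1 : ℂ) ^ j) atTop (𝓝 (0 - 0)) :=
      (h1.comp (tendsto_add_atTop_nat 1)).sub h1
    simpa [Finset.sum_range_succ] using h2
  have hbdd : BddAbove (Set.range fun n => ‖a n‖) := by
    have : Tendsto (fun n => ‖a n‖) atTop (𝓝 ‖(0 : ℂ)‖) := ha0.norm
    simpa using this.bddAbove_range
  obtain ⟨C, hC⟩ := hbdd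
  have hrad : (1 : ENNReal) ≤ q.radius := by
    have := q.le_radius_of_bound C (r := 1) ?_
    · simpa using this
    · intro n
      have hn : ‖q n‖ ≤ ‖a n‖ := by
        rw [hq, FormalMultilinearSeries.ofScalars]
        calc ‖a n • ContinuousMultilinearMap.mkPiAlgebraFin ℂ n ℂ‖
            ≤ ‖a n‖ * ‖ContinuousMultilinearMap.mkPiAlgebraFin ℂ n ℂ‖ :=
              ContinuousMultilinearMap.opNorm_smul_le _ _
          _ ≤ ‖a n‖ := by
              rw [ContinuousMultilinearMap.norm_mkPiAlgebraFin]; simp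
      have : ‖a n‖ ≤ C := hC (Set.mem_range_self n)
      simpa using hn.trans this
  have hpos : 0 < q.radius := lt_of_lt_of_le one_pos hrad
  have hball : HasFPowerSeriesOnBall q.sum q 0 q.radius := q.hasFPowerSeriesOnBall hpos
  have hzero : HasFPowerSeriesAt 0 q 0 := by
    refine hball.hasFPowerSeriesAt.congr ?_
    have hmem : EMetric.ball (0 : ℂ) q.radius ∈ 𝓝 (0 : ℂ) :=
      EMetric.isOpen_ball.mem_nhds (by simpa using hpos)
    filter_upwards [hmem] with t ht
    have hs : HasSum (fun n => q n fun _ => t) (q.sum t) := q.hasSum (by simpa [edist_zero_right] using Metric.mem_eball.mp ht)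
    have h1 : Tendsto (fun n => ∑ j ∈ Finset.range n, q j fun _ => t) atTop (𝓝 (q.sum t)) :=
      hs.tendsto_sum_nat
    have h2 : Tendsto (fun n => ∑ j ∈ Finset.range n, q j fun _ => t) atTop (𝓝 0) := by
      have := h t
      refine this.congr fun n => ?_
      exact Finset.sum_congr rfl fun j _ => (hqapp j t).symm
    exact tendsto_nhds_unique h1 h2
  intro j
  have := hzero.apply_eq_zero j 1
  simpa [hqapp j 1] using this

/-- An entire function given by an everywhere-convergent Taylor series at `0`
is orthogonally additive iff every homogeneous term is orthogonally additive. -/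
theorem orthAdd_iff_forall_taylor_orthAdd
    {K : Type*} [TopologicalSpace K] [CompactSpace K] [T2Space K]
    (f : C(K, ℂ) → ℂ) (P : ℕ → C(K, ℂ) → ℂ)
    (hP : ∀ k, IsHomogPoly k (P k))
    (hf : ∀ x : C(K, ℂ),
      Tendsto (fun n => ∑ k ∈ Finset.range n, P k x) atTop (𝓝 (f x))) :
    IsOrthAdd f ↔ ∀ k, IsOrthAdd (P k) := by
  -- homogeneity of each `P k`
  have hhom : ∀ (k : ℕ) (t : ℂ) (z : C(K, ℂ)), P k (t • z) = t ^ k * P k z := by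
    intro k t z
    obtain ⟨M, hM⟩ := hP k
    rw [hM, hM]
    have := M.map_smul_univ (fun _ : Fin k => t) (fun _ => z)
    simpa [smul_eq_mul] using this
  constructor
  · intro hfOA k x y hxy
    -- scale: `t•x` and `t•y` are orthogonal for all `t`
    set a : ℕ → ℂ := fun j => P j (x + y) - P j x - P j y with ha
    have key : ∀ t : ℂ, Tendsto (fun n => ∑ j ∈ Finset.range n, a j * t ^ j) atTop (𝓝 0) := by
      intro t
      have horth : (t • x) * (t • y) = 0 := by
        ext p
        have := DFunLike.congr_fun hxy p
        simp only [ContinuousMap.mul_apply, ContinuousMap.smul_apply, smul_eq_mul] at *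
        simp only [ContinuousMap.coe_zero, Pi.zero_apply] at this ⊢
        ring_nf
        rw [mul_assoc, this, mul_zero]
      have heq : f (t • x + t • y) = f (t • x) + f (t • y) := hfOA _ _ horth
      have hsum : t • x + t • y = t • (x + y) := (smul_add t x y).symm
      have T1 := hf (t • (x + y))
      have T2 := hf (t • x)
      have T3 := hf (t • y)
      have Tall : Tendsto (fun n => (∑ j ∈ Finset.range n, P j (t • (x + y)))
          - (∑ j ∈ Finset.range n, P j (t • x)) - (∑ j ∈ Finset.range n, P j (t • y)))
          atTop (𝓝 (f (t • (x + y)) - f (t • x) - f (t • y))) := (T1.sub T2).sub T3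
      have hlim0 : f (t • (x + y)) - f (t • x) - f (t • y) = 0 := by
        rw [← hsum, heq]; ring
      rw [hlim0] at Tall
      refine Tall.congr fun n => ?_
      rw [← Finset.sum_sub_distrib, ← Finset.sum_sub_distrib]
      refine Finset.sum_congr rfl fun j _ => ?_
      rw [ha]
      simp only [hhom]
      ring
    have := coeff_eq_zero_of_tendsto_zero key k
    rw [ha] at this
    simp only at this
    linear_combination this
  · intro hOA x y hxy
    have h1 : Tendsto (fun n => ∑ k ∈ Finset.range n, P k (x + y)) atTop (𝓝 (f (x + y))) :=
      hf (x + y)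
    have h2 : Tendsto (fun n => ∑ k ∈ Finset.range n, P k (x + y)) atTop (𝓝 (f x + f y)) := by
      refine ((hf x).add (hf y)).congr fun n => ?_
      rw [← Finset.sum_add_distrib]
      exact Finset.sum_congr rfl fun k _ => (hOA k x y hxy).symm
    exact tendsto_nhds_unique h1 h2
end

section
/- Let K be a compact Hausdorff space, k ≥ 1 an integer, μ a complex regular Borel measure on K, and let P : C(K) → ℂ be given by P(x) = ∫_K x(t)^k dμ(t). Then the total variation of μ satisfies |μ|(K) ≤ sup_{‖x‖_∞ ≤ 1} |P(x)|; consequently |μ|(K) = ‖P‖, where ‖P‖ = sup_{‖x‖_∞ ≤ 1} |P(x)|. -/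
open MeasureTheory Filter Topology

/-- The norm `‖P‖ = sup_{‖x‖ ≤ 1} |P x|` of a polynomial on `C(K, ℂ)`. -/
noncomputable def polyNorm {K : Type*} [TopologicalSpace K] [CompactSpace K]
    (P : C(K, ℂ) → ℂ) : ℝ :=
  sSup ((fun x => ‖P x‖) '' Metric.closedBall (0 : C(K, ℂ)) 1)

lemma aux_pow_sub_pow (a b : ℂ) (ha : ‖a‖ ≤ 1) (hb : ‖b‖ ≤ 1) (k : ℕ) :
    ‖a ^ k - b ^ k‖ ≤ k * ‖a - b‖ := by
  induction k with
  | zero => simp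
  | succ n ih =>
    have h1 : a ^ (n + 1) - b ^ (n + 1) = a * (a ^ n - b ^ n) + (a - b) * b ^ n := by ring
    calc ‖a ^ (n + 1) - b ^ (n + 1)‖
        ≤ ‖a * (a ^ n - b ^ n)‖ + ‖(a - b) * b ^ n‖ := by rw [h1]; exact norm_add_le _ _
      _ = ‖a‖ * ‖a ^ n - b ^ n‖ + ‖a - b‖ * ‖b‖ ^ n := by rw [norm_mul, norm_mul, norm_pow]
      _ ≤ 1 * ((n : ℝ) * ‖a - b‖) + ‖a - b‖ * 1 := by
          have h2 : ‖b‖ ^ n ≤ 1 := pow_le_one₀ (norm_nonneg _) hb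
          have h3 := mul_le_mul ha ih (norm_nonneg _) zero_le_one
          have h4 := mul_le_mul_of_nonneg_left h2 (norm_nonneg (a - b))
          linarith
      _ = ((n + 1 : ℕ) : ℝ) * ‖a - b‖ := by push_cast; ring

lemma aux_trunc_norm (z : ℂ) : ‖z / ((max 1 ‖z‖ : ℝ) : ℂ)‖ ≤ 1 := by
  have h1 : (1 : ℝ) ≤ max 1 ‖z‖ := le_max_left _ _
  rw [norm_div, Complex.norm_real, Real.norm_eq_abs,
    abs_of_pos (lt_of_lt_of_le one_pos h1), div_le_one (lt_of_lt_of_le one_pos h1)]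
  exact le_max_right _ _

lemma aux_trunc_sub (z v : ℂ) (hv : ‖v‖ = 1) :
    ‖z / ((max 1 ‖z‖ : ℝ) : ℂ) - v‖ ≤ 2 * ‖z - v‖ := by
  have key : ‖z / ((max 1 ‖z‖ : ℝ) : ℂ) - z‖ ≤ ‖z - v‖ := by
    rcases le_total ‖z‖ 1 with h | h
    · rw [max_eq_left h]
      simp
    · rw [max_eq_right h]
      have hz0 : ‖z‖ ≠ 0 := by linarith
      have hz0c : ((‖z‖ : ℝ) : ℂ) ≠ 0 := Complex.ofReal_ne_zero.2 hz0
      have h4 : z / ((‖z‖ : ℝ) : ℂ) - z = z * (((1 - ‖z‖) / ‖z‖ : ℝ) : ℂ) := by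
        rw [Complex.ofReal_div, Complex.ofReal_sub, Complex.ofReal_one,
          ← mul_div_assoc, mul_sub, mul_one, sub_div,
          mul_div_cancel_right₀ _ hz0c]
      rw [h4, norm_mul, Complex.norm_real, Real.norm_eq_abs]
      have h2 : |(1 - ‖z‖) / ‖z‖| = (‖z‖ - 1) / ‖z‖ := by
        rw [abs_div, abs_of_nonneg (by linarith : (0:ℝ) ≤ ‖z‖), abs_of_nonpos (by linarith)]
        ring_nf
      rw [h2]
      have h3 : ‖z‖ * ((‖z‖ - 1) / ‖z‖) = ‖z‖ - 1 := by
        rw [mul_comm]; exact div_mul_cancel₀ _ hz0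
      rw [h3]
      calc ‖z‖ - 1 = ‖z‖ - ‖v‖ := by rw [hv]
        _ ≤ ‖z - v‖ := norm_sub_norm_le _ _
  calc ‖z / ((max 1 ‖z‖ : ℝ) : ℂ) - v‖
      ≤ ‖z / ((max 1 ‖z‖ : ℝ) : ℂ) - z‖ + ‖z - v‖ := by
        simpa using norm_add_le (z / ((max 1 ‖z‖ : ℝ) : ℂ) - z) (z - v)
    _ ≤ ‖z - v‖ + ‖z - v‖ := by gcongr
    _ = 2 * ‖z - v‖ := by ring

/-- Let `μ` be a complex regular Borel measure on `K`, encoded in polar form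
`w · μ` with `μ` finite positive regular and `w` unimodular, so that its total
variation is `μ(K)`.  For `k ≥ 1` and `P x = ∫_K x(t)^k dμ(t)` one has
`|μ|(K) ≤ sup_{‖x‖_∞ ≤ 1} |P x|`, and consequently `|μ|(K) = ‖P‖`. -/
theorem totalVariation_le_polyNorm
    {K : Type*} [TopologicalSpace K] [CompactSpace K] [T2Space K]
    [MeasurableSpace K] [BorelSpace K]
    (k : ℕ) (hk : 1 ≤ k)
    (μ : Measure K) [IsFiniteMeasure μ] (hreg : μ.Regular)
    (w : K → ℂ) (hw : Measurable w) (hw1 : ∀ t, ‖w t‖ = 1)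
    (P : C(K, ℂ) → ℂ)
    (hPdef : ∀ x : C(K, ℂ), P x = ∫ t, (x t) ^ k * w t ∂μ) :
    (μ Set.univ).toReal ≤ polyNorm P ∧ (μ Set.univ).toReal = polyNorm P := by
  haveI : μ.Regular := hreg
  haveI : μ.WeaklyRegular := inferInstance
  set M := (μ Set.univ).toReal with hM
  have hM0 : 0 ≤ M := ENNReal.toReal_nonneg
  set S := (fun x => ‖P x‖) '' Metric.closedBall (0 : C(K, ℂ)) 1 with hS
  have hpoly : polyNorm P = sSup S := rfl
  -- integrability of functions bounded by 1
  have hbdd : ∀ f : K → ℂ, AEStronglyMeasurable f μ → (∀ t, ‖f t‖ ≤ 1) → Integrable f μ :=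
    fun f hf hb => (integrable_const (1 : ℝ)).mono' hf (Eventually.of_forall hb)
  -- upper bound
  have hub : ∀ x : C(K, ℂ), ‖x‖ ≤ 1 → ‖P x‖ ≤ M := by
    intro x hx
    have hxt : ∀ t, ‖x t‖ ≤ 1 := fun t => (x.norm_coe_le_norm t).trans hx
    rw [hPdef]
    calc ‖∫ t, (x t) ^ k * w t ∂μ‖ ≤ ∫ t, ‖(x t) ^ k * w t‖ ∂μ :=
          norm_integral_le_integral_norm _
      _ ≤ ∫ _t, (1 : ℝ) ∂μ := by
          apply integral_mono_of_nonneg (Eventually.of_forall fun t => norm_nonneg _)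
            (integrable_const 1)
          refine Eventually.of_forall fun t => ?_
          simp only [norm_mul, norm_pow, hw1 t, mul_one]
          exact pow_le_one₀ (norm_nonneg _) (hxt t)
      _ = M := by rw [integral_const, smul_eq_mul, mul_one]; rfl
  have hS_bdd : ∀ y ∈ S, y ≤ M := by
    rintro y ⟨x, hx, rfl⟩
    exact hub x (by rwa [Metric.mem_closedBall, dist_zero_right] at hx)
  have hS_bddAbove : BddAbove S := ⟨M, fun y hy => hS_bdd y hy⟩
  have hsup_le : polyNorm P ≤ M := by rw [hpoly]; exact Real.sSup_le hS_bdd hM0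
  -- the unimodular measurable k-th root of the conjugate of w
  set v : K → ℂ := fun t => Complex.exp (((-(w t).arg / k : ℝ) : ℂ) * Complex.I) with hv
  have hv1 : ∀ t, ‖v t‖ = 1 := fun t => by
    rw [hv]; exact Complex.norm_exp_ofReal_mul_I _
  have hvk : ∀ t, (v t) ^ k * w t = 1 := by
    intro t
    have hk0 : (k : ℝ) ≠ 0 := Nat.cast_ne_zero.2 (by omega)
    set a := (w t).arg with ha
    have hr : (k : ℝ) * (-a / k) = -a := by
      rw [mul_comm]; exact div_mul_cancel₀ _ hk0
    have h1 : (v t) ^ k = Complex.exp (((-a : ℝ) : ℂ) * Complex.I) := by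
      simp only [hv]
      rw [← Complex.exp_nat_mul]
      congr 1
      rw [← ha,
        show ((k : ℂ)) * (((-a / k : ℝ) : ℂ) * Complex.I)
          = (((k * (-a / k) : ℝ) : ℂ)) * Complex.I by push_cast; ring, hr]
    have h2 : Complex.exp ((a : ℂ) * Complex.I) = w t := by
      conv_rhs => rw [← Complex.norm_mul_exp_arg_mul_I (w t)]
      rw [show ‖w t‖ = 1 from hw1 t, ← ha]
      simp
    rw [h1, ← h2, ← Complex.exp_add,
      show ((-a : ℝ) : ℂ) * Complex.I + (a : ℂ) * Complex.I = 0 by push_cast; ring]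
    exact Complex.exp_zero
  have hvm : Measurable v := by
    apply Complex.measurable_exp.comp
    exact ((Complex.measurable_ofReal.comp
      (((Complex.measurable_arg.comp hw).neg).div_const _)).mul_const Complex.I)
  have hv_int : Integrable v μ :=
    hbdd v hvm.aestronglyMeasurable fun t => (hv1 t).le
  -- lower bound, up to δ
  have hlow : ∀ δ : ℝ, 0 < δ → M ≤ polyNorm P + δ := by
    intro δ hδ
    have hkpos : (0 : ℝ) < k := by exact_mod_cast hk
    set ε := δ / (2 * k) with hε
    have hε0 : 0 < ε := div_pos hδ (by linarith)
    obtain ⟨g, hg_le, hg_int⟩ := hv_int.exists_boundedContinuous_integral_sub_le hε0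
    have hmc : Continuous fun t : K => ((max 1 ‖g t‖ : ℝ) : ℂ) :=
      Complex.continuous_ofReal.comp (continuous_const.max g.continuous.norm)
    have hmne : ∀ t : K, ((max 1 ‖g t‖ : ℝ) : ℂ) ≠ 0 := fun t => by
      simp only [ne_eq, Complex.ofReal_eq_zero]
      have : (1 : ℝ) ≤ max 1 ‖g t‖ := le_max_left _ _
      intro h; rw [h] at this; linarith
    set x : C(K, ℂ) := ⟨fun t => g t / ((max 1 ‖g t‖ : ℝ) : ℂ),
      g.continuous.div hmc hmne⟩ with hxdef
    have hx1 : ∀ t, ‖x t‖ ≤ 1 := fun t => aux_trunc_norm (g t)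
    have hxnorm : ‖x‖ ≤ 1 := by
      apply (ContinuousMap.norm_le _ zero_le_one).2 hx1
    have hx_mem : x ∈ Metric.closedBall (0 : C(K, ℂ)) 1 := by
      rw [Metric.mem_closedBall, dist_zero_right]; exact hxnorm
    have hxv : ∀ t, ‖x t - v t‖ ≤ 2 * ‖v t - g t‖ := by
      intro t
      have := aux_trunc_sub (g t) (v t) (hv1 t)
      rwa [norm_sub_rev (g t)] at this
    have hg_norm_int : Integrable (fun t => ‖v t - g t‖) μ := (hv_int.sub hg_int).norm
    have hint1 : Integrable (fun t => (x t) ^ k * w t) μ := by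
      refine hbdd _ (((x.continuous.measurable.pow_const k).mul hw).aestronglyMeasurable)
        fun t => ?_
      rw [norm_mul, norm_pow, hw1, mul_one]
      exact pow_le_one₀ (norm_nonneg _) (hx1 t)
    have hint2 : Integrable (fun t => (v t) ^ k * w t) μ := by
      refine hbdd _ (((hvm.pow_const k).mul hw).aestronglyMeasurable) fun t => ?_
      rw [hvk t]; simp
    have h2 : ∫ t, (v t) ^ k * w t ∂μ = (M : ℂ) := by
      simp only [hvk]
      rw [integral_const, hM]
      simp; rfl
    have hPx : ‖P x - (M : ℂ)‖ ≤ 2 * k * ε := by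
      rw [hPdef, ← h2, ← integral_sub hint1 hint2]
      calc ‖∫ t, ((x t) ^ k * w t - (v t) ^ k * w t) ∂μ‖
          ≤ ∫ t, ‖(x t) ^ k * w t - (v t) ^ k * w t‖ ∂μ := norm_integral_le_integral_norm _
        _ ≤ ∫ t, 2 * k * ‖v t - g t‖ ∂μ := by
            apply integral_mono_of_nonneg (Eventually.of_forall fun t => norm_nonneg _)
              (hg_norm_int.const_mul _)
            refine Eventually.of_forall fun t => ?_
            simp only [← sub_mul, norm_mul, hw1 t, mul_one]
            calc ‖(x t) ^ k - (v t) ^ k‖ ≤ k * ‖x t - v t‖ :=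
                  aux_pow_sub_pow _ _ (hx1 t) (hv1 t).le k
              _ ≤ (k : ℝ) * (2 * ‖v t - g t‖) := by
                  apply mul_le_mul_of_nonneg_left (hxv t) (by positivity)
              _ = 2 * k * ‖v t - g t‖ := by ring
        _ = 2 * k * ∫ t, ‖v t - g t‖ ∂μ := integral_const_mul _ _
        _ ≤ 2 * k * ε := mul_le_mul_of_nonneg_left hg_le (by positivity)
    have hMnorm : ‖((M : ℝ) : ℂ)‖ = M := by
      rw [Complex.norm_real, Real.norm_eq_abs, abs_of_nonneg hM0]
    have h1 : ‖((M : ℝ) : ℂ)‖ - ‖P x‖ ≤ ‖P x - (M : ℂ)‖ := by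
      rw [norm_sub_rev]; exact norm_sub_norm_le _ _
    have hxS : ‖P x‖ ≤ polyNorm P := by
      rw [hpoly]
      exact le_csSup hS_bddAbove ⟨x, hx_mem, rfl⟩
    have h2kε : 2 * (k : ℝ) * ε = δ := by
      rw [hε]; field_simp
    rw [hMnorm] at h1
    linarith
  have hle : M ≤ polyNorm P := le_of_forall_pos_le_add hlow
  exact ⟨hle, le_antisymm hle hsup_le⟩
end

section
/- Let K be a compact Hausdorff space and let f : C(K) → ℂ be an orthogonally additive holomorphic function of bounded type with Taylor expansion f = ∑_{k≥1} P_k at zero, and for each k let μ_k be a complex regular Borel measure on K with P_k(x) = ∫_K x(t)^k dμ_k(t) for all x ∈ C(K). Then |μ_k|(K) ≤ ‖P_k‖ for every k, the series ∑_{k≥1} |μ_k|(K) converges, and there exists a finite positive Borel measure μ on K (namely μ = ∑_k |μ_k|) such that μ_k is absolutely continuous with respect to μ for every k. -/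
open MeasureTheory Filter Topology

/-- `|a^n - b^n| ≤ n |a - b|` for `a, b` in the closed unit disc. -/
lemma aux_norm_pow_sub_pow_le (a b : ℂ) (ha : ‖a‖ ≤ 1) (hb : ‖b‖ ≤ 1) (n : ℕ) :
    ‖a ^ n - b ^ n‖ ≤ n * ‖a - b‖ := by
  induction n with
  | zero => simp
  | succ n ih =>
    have key : a ^ (n + 1) - b ^ (n + 1) = a * (a ^ n - b ^ n) + (a - b) * b ^ n := by ring
    have hbn : ‖b ^ n‖ ≤ 1 := by
      rw [norm_pow]; exact pow_le_one₀ (norm_nonneg _) hb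
    calc ‖a ^ (n + 1) - b ^ (n + 1)‖
        ≤ ‖a * (a ^ n - b ^ n)‖ + ‖(a - b) * b ^ n‖ := by rw [key]; exact norm_add_le _ _
      _ = ‖a‖ * ‖a ^ n - b ^ n‖ + ‖a - b‖ * ‖b ^ n‖ := by rw [norm_mul, norm_mul]
      _ ≤ 1 * (n * ‖a - b‖) + ‖a - b‖ * 1 := by
          gcongr <;> first
            | exact mul_le_mul ha ih (norm_nonneg _) zero_le_one
            | exact mul_le_mul le_rfl hbn (norm_nonneg _) (norm_nonneg _)
      _ = (n + 1 : ℕ) * ‖a - b‖ := by push_cast; ring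
  
/-- Key estimate: the total variation of a representing measure is at most
the polynomial norm. -/
lemma aux_totalVar_le_polyNorm {K : Type*} [TopologicalSpace K] [CompactSpace K] [T2Space K]
    [MeasurableSpace K] [BorelSpace K]
    (k : ℕ) (hk : 1 ≤ k) (Q : C(K, ℂ) → ℂ) (hQ : IsHomogPoly k Q)
    (μ : Measure K) [IsFiniteMeasure μ] [μ.Regular]
    (w : K → ℂ) (hwm : Measurable w) (hw1 : ∀ t, ‖w t‖ = 1)
    (hrep : ∀ x : C(K, ℂ), Q x = ∫ t, (x t) ^ k * w t ∂μ) :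
    (μ Set.univ).toReal ≤ polyNorm Q := by
  obtain ⟨M, hM⟩ := hQ
  have hkR : (0 : ℝ) < k := by exact_mod_cast hk
  -- boundedness of the defining set of `polyNorm`
  have hbdd : BddAbove ((fun x => ‖Q x‖) '' Metric.closedBall (0 : C(K, ℂ)) 1) := by
    refine ⟨‖M‖, ?_⟩
    rintro - ⟨x, hx, rfl⟩
    rw [Metric.mem_closedBall, dist_zero_right] at hx
    show ‖Q x‖ ≤ ‖M‖
    rw [hM]
    calc ‖M fun _ => x‖ ≤ ‖M‖ * ∏ _i : Fin k, ‖x‖ := M.le_opNorm _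
      _ ≤ ‖M‖ * 1 := by
          gcongr
          exact Finset.prod_le_one (fun _ _ => norm_nonneg _) (fun _ _ => hx)
      _ = ‖M‖ := mul_one _
  -- the measurable k-th root of the conjugate of w
  set g : K → ℂ := fun t => Complex.exp ((↑(-(Complex.arg (w t)) / k) : ℂ) * Complex.I) with hg
  have hg1 : ∀ t, ‖g t‖ = 1 := fun t => Complex.norm_exp_ofReal_mul_I _
  have hgk : ∀ t, (g t) ^ k * w t = 1 := by
    intro t
    have hwne : w t ≠ 0 := by
      intro h; have := hw1 t; rw [h] at this; simp at this
    have hwe : Complex.exp (↑(Complex.arg (w t)) * Complex.I) = w t := by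
      have := Complex.norm_mul_exp_arg_mul_I (w t)
      have habs : ((‖w t‖ : ℝ) : ℂ) = 1 := by
        rw [hw1 t]; simp
      rwa [habs, one_mul] at this
    have hpow : (g t) ^ k = Complex.exp (↑(-(Complex.arg (w t))) * Complex.I) := by
      rw [hg]
      rw [← Complex.exp_nat_mul]
      congr 1
      have : (k : ℂ) * ((↑(-(Complex.arg (w t)) / k) : ℂ) * Complex.I)
          = (↑((k : ℝ) * (-(Complex.arg (w t)) / k)) : ℂ) * Complex.I := by
        push_cast; ring
      rw [this]
      congr 2
      rw [mul_comm, div_mul_cancel₀ _ hkR.ne']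
    rw [hpow]
    have : (↑(-(Complex.arg (w t))) : ℂ) * Complex.I
        = -((↑(Complex.arg (w t)) : ℂ) * Complex.I) := by push_cast; ring
    rw [this, Complex.exp_neg, hwe]
    exact inv_mul_cancel₀ hwne
  have hgm : Measurable g := by
    apply (Complex.continuous_exp.comp
      ((Complex.continuous_ofReal.comp continuous_id).mul continuous_const)).measurable.comp
    exact ((Complex.measurable_arg.comp hwm).neg.div_const _)
  have hgint : Integrable g μ := by
    refine ⟨hgm.aestronglyMeasurable, ?_⟩
    exact HasFiniteIntegral.of_bounded (C := 1) (ae_of_all _ fun t => (hg1 t).le)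
  -- main estimate, up to ε
  refine le_of_forall_pos_le_add fun ε hε => ?_
  have hδ : 0 < ε / (2 * k) := by positivity
  obtain ⟨h, hh, hhint⟩ := hgint.exists_boundedContinuous_integral_sub_le hδ
  -- truncation of h to the unit ball
  have hden : ∀ t, (0:ℝ) < max 1 ‖h t‖ := fun t => lt_of_lt_of_le one_pos (le_max_left _ _)
  set x : C(K, ℂ) := ⟨fun t => (max 1 ‖h t‖)⁻¹ • h t,
    ((continuous_const.max h.continuous.norm).inv₀
      (fun t => (hden t).ne')).smul h.continuous⟩ with hxdef
  have hxval : ∀ t, x t = (max 1 ‖h t‖)⁻¹ • h t := fun t => rfl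
  have hx1 : ∀ t, ‖x t‖ ≤ 1 := by
    intro t
    rw [hxval, norm_smul, norm_inv, Real.norm_of_nonneg (hden t).le]
    rw [inv_mul_le_iff₀ (hden t), mul_one]
    exact le_max_right _ _
  have hxmem : x ∈ Metric.closedBall (0 : C(K, ℂ)) 1 := by
    rw [Metric.mem_closedBall, dist_zero_right]
    exact (ContinuousMap.norm_le _ zero_le_one).2 hx1
  -- pointwise estimate ‖x t - g t‖ ≤ 2 ‖g t - h t‖
  have hxg : ∀ t, ‖x t - g t‖ ≤ 2 * ‖g t - h t‖ := by
    intro t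
    have hxh : ‖x t - h t‖ ≤ ‖g t - h t‖ := by
      rcases le_or_gt ‖h t‖ 1 with hht | hht
      · have : max 1 ‖h t‖ = 1 := max_eq_left hht
        rw [hxval, this]; simp
      · have hm : max 1 ‖h t‖ = ‖h t‖ := max_eq_right hht.le
        have hne : h t ≠ 0 := by
          intro h0; rw [h0] at hht; simp at hht; linarith
        have : x t - h t = ((‖h t‖⁻¹ - 1 : ℝ)) • h t := by
          rw [hxval, hm, sub_smul, one_smul]
        rw [this, norm_smul, Real.norm_eq_abs]
        have h1 : |‖h t‖⁻¹ - 1| = 1 - ‖h t‖⁻¹ := by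
          rw [abs_of_nonpos]; · ring
          · have := (inv_le_one₀ (by linarith : (0:ℝ) < ‖h t‖)).2 hht.le
            linarith
        rw [h1, sub_mul, one_mul, inv_mul_cancel₀ (by positivity : ‖h t‖ ≠ 0)]
        have : ‖h t‖ - 1 ≤ ‖g t - h t‖ := by
          have := norm_sub_norm_le (h t) (g t)
          rw [hg1 t] at this
          calc ‖h t‖ - 1 ≤ ‖h t - g t‖ := this
            _ = ‖g t - h t‖ := norm_sub_rev _ _
        linarith
    calc ‖x t - g t‖ ≤ ‖x t - h t‖ + ‖h t - g t‖ := norm_sub_le_norm_sub_add_norm_sub _ _ _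
      _ ≤ ‖g t - h t‖ + ‖g t - h t‖ := by
          gcongr
          · rw [norm_sub_rev]
      _ = 2 * ‖g t - h t‖ := by ring
  -- integrability facts
  have hxint : Integrable (fun t => (x t) ^ k * w t) μ := by
    refine ⟨((x.continuous.measurable.pow_const k).mul hwm).aestronglyMeasurable, ?_⟩
    refine HasFiniteIntegral.of_bounded (C := 1) (ae_of_all _ fun t => ?_)
    rw [norm_mul, hw1, mul_one, norm_pow]
    exact pow_le_one₀ (norm_nonneg _) (hx1 t)
  have hgkint : Integrable (fun t => (g t) ^ k * w t) μ := by
    refine ⟨((hgm.pow_const k).mul hwm).aestronglyMeasurable, ?_⟩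
    refine HasFiniteIntegral.of_bounded (C := 1) (ae_of_all _ fun t => ?_)
    rw [hgk]; simp
  have hghint : Integrable (fun t => ‖g t - h t‖) μ := (hgint.sub hhint).norm
  -- ∫ g^k w = μ(univ)
  have hint1 : ∫ t, (g t) ^ k * w t ∂μ = ((μ Set.univ).toReal : ℂ) := by
    have : (fun t => (g t) ^ k * w t) = fun _ => (1 : ℂ) := funext hgk
    rw [this, integral_const]
    simp [Measure.real]
  -- the difference estimate
  have hdiff : ‖((μ Set.univ).toReal : ℂ) - Q x‖ ≤ ε := by
    rw [hrep x, ← hint1, ← integral_sub hgkint hxint]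
    calc ‖∫ t, ((g t) ^ k * w t - (x t) ^ k * w t) ∂μ‖
        ≤ ∫ t, ‖(g t) ^ k * w t - (x t) ^ k * w t‖ ∂μ := norm_integral_le_integral_norm _
      _ ≤ ∫ t, (2 * k) * ‖g t - h t‖ ∂μ := by
          refine integral_mono ((hgkint.sub hxint).norm) (hghint.const_mul _) fun t => ?_
          have : (g t) ^ k * w t - (x t) ^ k * w t = ((g t) ^ k - (x t) ^ k) * w t := by ring
          rw [this, norm_mul, hw1, mul_one]
          calc ‖(g t) ^ k - (x t) ^ k‖ ≤ k * ‖g t - x t‖ :=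
                aux_norm_pow_sub_pow_le _ _ (hg1 t).le (hx1 t) k
            _ ≤ k * (2 * ‖g t - h t‖) := by
                rw [norm_sub_rev]
                exact mul_le_mul_of_nonneg_left (hxg t) (by positivity)
            _ = (2 * k) * ‖g t - h t‖ := by ring
      _ = (2 * k) * ∫ t, ‖g t - h t‖ ∂μ := integral_const_mul _ _
      _ ≤ (2 * k) * (ε / (2 * k)) := by
          exact mul_le_mul_of_nonneg_left hh (by positivity)
      _ = ε := by field_simp
  -- conclude
  have hQx : ‖Q x‖ ≤ polyNorm Q := le_csSup hbdd ⟨x, hxmem, rfl⟩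
  have : (μ Set.univ).toReal ≤ ‖Q x‖ + ε := by
    have h1 : ((μ Set.univ).toReal : ℝ) = ‖((μ Set.univ).toReal : ℂ)‖ := by
      rw [Complex.norm_real, Real.norm_of_nonneg ENNReal.toReal_nonneg]
    calc (μ Set.univ).toReal = ‖((μ Set.univ).toReal : ℂ)‖ := h1
      _ ≤ ‖Q x‖ + ‖((μ Set.univ).toReal : ℂ) - Q x‖ := by
          have := norm_add_le (Q x) (((μ Set.univ).toReal : ℂ) - Q x)
          simpa using this
      _ ≤ ‖Q x‖ + ε := by linarith [hdiff]
  linarith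

/-- Let `f` be an orthogonally additive holomorphic function of bounded type on
`C(K)` with Taylor expansion `f = ∑_{k ≥ 1} Pₖ` at zero, and for each `k ≥ 1`
let `μₖ` be a complex regular Borel measure on `K` (encoded in polar form
`wₖ · mₖ`, with total variation `mₖ`) representing `Pₖ`.  Then
`|μₖ|(K) ≤ ‖Pₖ‖` for each `k ≥ 1`, the series `∑_{k ≥ 1} |μₖ|(K)` converges,
and there is a finite positive Borel measure `μ` on `K` with `μₖ ≪ μ` (i.e.
`|μₖ| = mₖ ≪ μ`) for all `k ≥ 1`. -/
theorem taylor_measures_summable_and_dominated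
    {K : Type*} [TopologicalSpace K] [CompactSpace K] [T2Space K]
    [MeasurableSpace K] [BorelSpace K]
    (f : C(K, ℂ) → ℂ) (P : ℕ → C(K, ℂ) → ℂ)
    (hP : ∀ k, 1 ≤ k → IsHomogPoly k (P k))
    (hf : ∀ x : C(K, ℂ), HasSum (fun k : ℕ => P (k + 1) x) (f x))
    (hb : ∀ r : ℝ, 0 < r → Summable (fun k : ℕ => polyNorm (P (k + 1)) * r ^ (k + 1)))
    (hOA : IsOrthAdd f)
    (m : ℕ → Measure K) (w : ℕ → K → ℂ)
    (hfin : ∀ k, 1 ≤ k → IsFiniteMeasure (m k))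
    (hreg : ∀ k, 1 ≤ k → (m k).Regular)
    (hwm : ∀ k, 1 ≤ k → Measurable (w k))
    (hw1 : ∀ k, 1 ≤ k → ∀ t, ‖w k t‖ = 1)
    (hrep : ∀ k, 1 ≤ k → ∀ x : C(K, ℂ), P k x = ∫ t, (x t) ^ k * w k t ∂(m k)) :
    (∀ k, 1 ≤ k → (m k Set.univ).toReal ≤ polyNorm (P k)) ∧
    Summable (fun k : ℕ => (m (k + 1) Set.univ).toReal) ∧
    ∃ μ : Measure K, IsFiniteMeasure μ ∧ ∀ k, 1 ≤ k → m k ≪ μ := by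
  have key : ∀ k, 1 ≤ k → (m k Set.univ).toReal ≤ polyNorm (P k) := by
    intro k hk
    haveI := hfin k hk
    haveI := hreg k hk
    exact aux_totalVar_le_polyNorm k hk (P k) (hP k hk) (m k) (w k)
      (hwm k hk) (hw1 k hk) (hrep k hk)
  refine ⟨key, ?_, ?_⟩
  · -- summability
    have h1 := hb 1 one_pos
    simp only [one_pow, mul_one] at h1
    refine Summable.of_nonneg_of_le (fun k => ENNReal.toReal_nonneg) (fun k => ?_) h1
    exact key (k + 1) (Nat.le_add_left 1 k)
  · -- dominating measure
    set c : ℕ → ENNReal := fun k => ((2 : ENNReal) ^ k * (m (k + 1) Set.univ + 1))⁻¹ with hc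
    refine ⟨Measure.sum (fun k => c k • m (k + 1)), ?_, ?_⟩
    · constructor
      rw [Measure.sum_apply _ MeasurableSet.univ]
      have hbound : ∀ k : ℕ, (c k • m (k + 1)) Set.univ ≤ (2 : ENNReal)⁻¹ ^ k := by
        intro k
        rw [Measure.smul_apply, smul_eq_mul]
        simp only [hc]
        haveI := hfin (k + 1) (Nat.le_add_left 1 k)
        have hne : m (k + 1) Set.univ + 1 ≠ 0 := by simp
        have h2ne : ((2 : ENNReal) ^ k) ≠ 0 := by positivity
        rw [ENNReal.mul_inv (Or.inl h2ne) (Or.inr hne)]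
        rw [mul_assoc]
        calc ((2 : ENNReal) ^ k)⁻¹ * ((m (k + 1) Set.univ + 1)⁻¹ * m (k + 1) Set.univ)
            ≤ ((2 : ENNReal) ^ k)⁻¹ * 1 := by
              gcongr
              rw [ENNReal.inv_mul_le_iff hne (by finiteness), mul_one]
              exact le_self_add
          _ = (2 : ENNReal)⁻¹ ^ k := by rw [mul_one, ← ENNReal.inv_pow]
      calc (∑' k, (c k • m (k + 1)) Set.univ) ≤ ∑' k : ℕ, (2 : ENNReal)⁻¹ ^ k :=
            ENNReal.tsum_le_tsum hbound
        _ = (1 - 2⁻¹)⁻¹ := ENNReal.tsum_geometric _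
        _ < ⊤ := by
            rw [show (1 : ENNReal) - 2⁻¹ = 2⁻¹ by
              rw [ENNReal.sub_eq_of_eq_add (by simp)]
              rw [ENNReal.inv_two_add_inv_two]]
            simp
    · intro k hk
      obtain ⟨j, rfl⟩ : ∃ j, k = j + 1 := ⟨k - 1, (Nat.succ_pred_eq_of_pos hk).symm⟩
      intro s hs
      haveI := hfin (j + 1) hk
      have hle : (c j • m (j + 1)) s ≤ Measure.sum (fun k => c k • m (k + 1)) s :=
        Measure.le_sum _ j s
      rw [hs] at hle
      have h0 : (c j • m (j + 1)) s = 0 := le_antisymm (by exact hle) (zero_le)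
      rw [Measure.smul_apply, smul_eq_mul] at h0
      have hcne : c j ≠ 0 := by
        rw [hc, ne_eq, ENNReal.inv_eq_zero]
        exact ENNReal.mul_ne_top (ENNReal.pow_ne_top (by simp)) (by finiteness)
      exact (mul_eq_zero.1 h0).resolve_left hcne
end

section
/- Let K be a compact Hausdorff space, μ a finite positive Borel measure on K, and g_k ∈ L¹(μ) for k ≥ 1 with ∑_{k≥1} ‖g_k‖_{L¹(μ)} r^k < ∞ for every r > 0. Define f : C(K) → ℂ by f(x) = ∫_K ∑_{k≥1} g_k(t) x(t)^k dμ(t). Then f is a holomorphic function of bounded type whose k-th Taylor polynomial at zero is the orthogonally additive continuous k-homogeneous polynomial P_k(x) = ∫_K x(t)^k g_k(t) dμ(t). -/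
open MeasureTheory Filter Topology

open MeasureTheory Filter Topology

section Aux
variable {K : Type*} [TopologicalSpace K] [CompactSpace K]
  [MeasurableSpace K] [BorelSpace K] (μ : Measure K) [IsFiniteMeasure μ]

lemma integrable_cm_mul {g : K → ℂ} (hg : Integrable g μ) (h : C(K, ℂ)) :
    Integrable (fun t => h t * g t) μ :=
  hg.bdd_mul h.continuous.aestronglyMeasurable (c := ‖h‖) (Eventually.of_forall fun t => h.norm_coe_le_norm t)

noncomputable def intCLM {g : K → ℂ} (hg : Integrable g μ) : C(K, ℂ) →L[ℂ] ℂ :=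
  LinearMap.mkContinuous
    { toFun := fun h => ∫ t, h t * g t ∂μ
      map_add' := fun a b => by
        simp only [ContinuousMap.add_apply, add_mul]
        exact integral_add (integrable_cm_mul μ hg a) (integrable_cm_mul μ hg b)
      map_smul' := fun c a => by
        simp only [ContinuousMap.smul_apply, smul_mul_assoc, integral_smul, RingHom.id_apply,
          smul_eq_mul]
        rw [← integral_const_mul]
        congr 1; ext t; ring }
    (∫ t, ‖g t‖ ∂μ)
    (fun h => by
      calc ‖∫ t, h t * g t ∂μ‖ ≤ ∫ t, ‖h t * g t‖ ∂μ := norm_integral_le_integral_norm _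
      _ ≤ ∫ t, ‖h‖ * ‖g t‖ ∂μ := by
          refine integral_mono_of_nonneg (Eventually.of_forall fun t => norm_nonneg _)
            (hg.norm.const_mul ‖h‖) (Eventually.of_forall fun t => ?_)
          simp only []
          rw [norm_mul]
          exact mul_le_mul_of_nonneg_right (h.norm_coe_le_norm t) (norm_nonneg _)
      _ = (∫ t, ‖g t‖ ∂μ) * ‖h‖ := by rw [integral_const_mul]; ring)

lemma intCLM_apply {g : K → ℂ} (hg : Integrable g μ) (h : C(K, ℂ)) :
    intCLM μ hg h = ∫ t, h t * g t ∂μ := rfl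

noncomputable def intML {g : K → ℂ} (hg : Integrable g μ) (k : ℕ) :
    ContinuousMultilinearMap ℂ (fun _ : Fin k => C(K, ℂ)) ℂ :=
  (intCLM μ hg).compContinuousMultilinearMap
    (ContinuousMultilinearMap.mkPiAlgebra ℂ (Fin k) C(K, ℂ))

lemma intML_apply {g : K → ℂ} (hg : Integrable g μ) (k : ℕ) (v : Fin k → C(K, ℂ)) :
    intML μ hg k v = ∫ t, (∏ i, v i t) * g t ∂μ := by
  simp only [intML, ContinuousLinearMap.compContinuousMultilinearMap_coe, Function.comp_apply,
    ContinuousMultilinearMap.mkPiAlgebra_apply, intCLM_apply]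
  congr 1
  ext t
  rw [ContinuousMap.prod_apply]

lemma intML_diag {g : K → ℂ} (hg : Integrable g μ) (k : ℕ) (x : C(K, ℂ)) :
    intML μ hg k (fun _ => x) = ∫ t, (x t) ^ k * g t ∂μ := by
  rw [intML_apply]
  simp [Finset.prod_const]

lemma intML_norm_le {g : K → ℂ} (hg : Integrable g μ) (k : ℕ) :
    ‖intML μ hg k‖ ≤ ∫ t, ‖g t‖ ∂μ := by
  refine ContinuousMultilinearMap.opNorm_le_bound (integral_nonneg fun t => norm_nonneg _)
    (fun v => ?_)
  rw [intML_apply]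
  calc ‖∫ t, (∏ i, v i t) * g t ∂μ‖ ≤ ∫ t, ‖(∏ i, v i t) * g t‖ ∂μ :=
        norm_integral_le_integral_norm _
  _ ≤ ∫ t, (∏ i, ‖v i‖) * ‖g t‖ ∂μ := by
      refine integral_mono_of_nonneg (Eventually.of_forall fun t => norm_nonneg _)
        (hg.norm.const_mul _) (Eventually.of_forall fun t => ?_)
      simp only []
      rw [norm_mul]
      refine mul_le_mul_of_nonneg_right ?_ (norm_nonneg _)
      calc ‖∏ i, v i t‖ = ∏ i, ‖v i t‖ := by rw [norm_prod]
      _ ≤ ∏ i, ‖v i‖ := Finset.prod_le_prod (fun i _ => norm_nonneg _)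
          (fun i _ => (v i).norm_coe_le_norm t)
  _ = (∫ t, ‖g t‖ ∂μ) * ∏ i, ‖v i‖ := by rw [integral_const_mul]; ring

end Aux

/-- Let `μ` be a finite positive Borel measure on `K` and `gₖ ∈ L¹(μ)` (`k ≥ 1`)
with `∑_{k ≥ 1} ‖gₖ‖_{L¹(μ)} rᵏ < ∞` for every `r > 0`.  Then
`f x = ∫_K ∑_{k ≥ 1} gₖ(t) x(t)^k dμ(t)` defines a holomorphic function of
bounded type on `C(K)` whose `k`-th Taylor polynomial at zero is the
orthogonally additive continuous `k`-homogeneous polynomial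
`Pₖ x = ∫_K x(t)^k gₖ(t) dμ(t)` (i.e. `f = ∑_{k ≥ 1} Pₖ` with each `Pₖ`
continuous `k`-homogeneous and orthogonally additive). -/


theorem powerSeriesIntegral_boundedType_taylor
    {K : Type*} [TopologicalSpace K] [CompactSpace K] [T2Space K]
    [MeasurableSpace K] [BorelSpace K]
    (μ : Measure K) [IsFiniteMeasure μ] (g : ℕ → K → ℂ)
    (hgi : ∀ k, 1 ≤ k → Integrable (g k) μ)
    (hgrowth : ∀ r : ℝ, 0 < r →
      Summable (fun k : ℕ => (∫ t, ‖g (k + 1) t‖ ∂μ) * r ^ (k + 1)))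
    (f : C(K, ℂ) → ℂ)
    (hfdef : ∀ x : C(K, ℂ), f x = ∫ t, (∑' k : ℕ, g (k + 1) t * (x t) ^ (k + 1)) ∂μ)
    (P : ℕ → C(K, ℂ) → ℂ)
    (hPdef : ∀ k, ∀ x : C(K, ℂ), P k x = ∫ t, (x t) ^ k * g k t ∂μ) :
    Differentiable ℂ f ∧
    (∀ r : ℝ, 0 < r → ∃ C : ℝ, ∀ x : C(K, ℂ), ‖x‖ ≤ r → ‖f x‖ ≤ C) ∧
    (∀ k, 1 ≤ k → IsHomogPoly k (P k)) ∧
    (∀ k, 1 ≤ k → IsOrthAdd (P k)) ∧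
    (∀ x : C(K, ℂ), HasSum (fun k : ℕ => P (k + 1) x) (f x)) := by
  classical
  -- modified coefficient functions, integrable for every index
  set G : ℕ → K → ℂ := fun k => if k = 0 then 0 else g k with hG
  have hGi : ∀ k, Integrable (G k) μ := by
    intro k
    rcases Nat.eq_zero_or_pos k with hk | hk
    · simp [hG, hk]
    · simpa [hG, Nat.pos_iff_ne_zero.mp hk] using hgi k hk
  have hGeq : ∀ k, 1 ≤ k → G k = g k := by
    intro k hk
    simp [hG, Nat.one_le_iff_ne_zero.mp hk]
  -- the formal multilinear series
  set p : FormalMultilinearSeries ℂ C(K, ℂ) ℂ := fun k => intML μ (hGi k) k with hp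
  have hpdiag : ∀ k (x : C(K, ℂ)), p k (fun _ => x) = ∫ t, (x t) ^ k * G k t ∂μ := by
    intro k x
    exact intML_diag μ (hGi k) k x
  have hpP : ∀ k, 1 ≤ k → ∀ x : C(K, ℂ), p k (fun _ => x) = P k x := by
    intro k hk x
    rw [hpdiag, hPdef, hGeq k hk]
  have hp0 : ∀ x : C(K, ℂ), p 0 (fun _ => x) = 0 := by
    intro x
    rw [hpdiag]
    simp [hG]
  have hpnorm : ∀ k, ‖p k‖ ≤ ∫ t, ‖G k t‖ ∂μ := fun k => intML_norm_le μ (hGi k) k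
  have hGnorm : ∀ k, (∫ t, ‖G (k + 1) t‖ ∂μ) = ∫ t, ‖g (k + 1) t‖ ∂μ := by
    intro k
    rw [hGeq (k + 1) (Nat.le_add_left 1 k)]
  -- integrability of the terms
  have hint : ∀ (k : ℕ) (x : C(K, ℂ)), 1 ≤ k →
      Integrable (fun t => g k t * (x t) ^ k) μ := by
    intro k x hk
    have h1 : Integrable (fun t => (x ^ k) t * g k t) μ :=
      integrable_cm_mul μ (hgi k hk) (x ^ k)
    refine h1.congr (Eventually.of_forall fun t => ?_)
    simp [ContinuousMap.pow_apply, mul_comm]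
  -- the HasSum statement
  have hsum : ∀ x : C(K, ℂ), HasSum (fun k : ℕ => P (k + 1) x) (f x) := by
    intro x
    have hr : (0 : ℝ) < ‖x‖ + 1 := by positivity
    have hxle : ∀ k : ℕ, (∫ t, ‖g (k + 1) t * (x t) ^ (k + 1)‖ ∂μ)
        ≤ (∫ t, ‖g (k + 1) t‖ ∂μ) * (‖x‖ + 1) ^ (k + 1) := by
      intro k
      rw [← integral_mul_const]
      refine integral_mono_of_nonneg (Eventually.of_forall fun t => norm_nonneg _)
        (((hgi (k + 1) (Nat.le_add_left 1 k)).norm.mul_const _))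
        (Eventually.of_forall fun t => ?_)
      simp only []
      rw [norm_mul, norm_pow]
      refine mul_le_mul_of_nonneg_left (pow_le_pow_left₀ (norm_nonneg _) ?_ _) (norm_nonneg _)
      exact (x.norm_coe_le_norm t).trans (by linarith)
    have hsummable : Summable (fun k : ℕ => ∫ t, ‖g (k + 1) t * (x t) ^ (k + 1)‖ ∂μ) := by
      refine Summable.of_nonneg_of_le (fun k => integral_nonneg fun t => norm_nonneg _)
        hxle (hgrowth _ hr)
    have hFint : ∀ k : ℕ, Integrable (fun t => g (k + 1) t * (x t) ^ (k + 1)) μ :=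
      fun k => hint (k + 1) x (Nat.le_add_left 1 k)
    have h := hasSum_integral_of_summable_integral_norm (μ := μ) hFint hsummable
    rw [← hfdef x] at h
    refine h.congr_fun fun k => ?_
    rw [hPdef]
    exact integral_congr_ae (Eventually.of_forall fun t => by ring)
  -- radius is infinite
  have hradius : p.radius = ⊤ := by
    refine p.radius_eq_top_of_summable_norm fun r => ?_
    have hr1 : (0 : ℝ) < (r : ℝ) + 1 := by positivity
    have h1 : Summable (fun k : ℕ => ‖p (k + 1)‖ * (r : ℝ) ^ (k + 1)) := by
      refine Summable.of_nonneg_of_le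
        (fun k => mul_nonneg (norm_nonneg _) (pow_nonneg r.coe_nonneg _))
        (fun k => ?_) (hgrowth _ hr1)
      refine mul_le_mul ((hpnorm (k + 1)).trans (le_of_eq (hGnorm k)))
        (pow_le_pow_left₀ r.coe_nonneg (by linarith) _)
        (pow_nonneg r.coe_nonneg _) (integral_nonneg fun t => norm_nonneg _)
    exact (summable_nat_add_iff 1).mp h1
  -- the power series representation on the whole space
  have hball : HasFPowerSeriesOnBall f p 0 ⊤ := by
    refine ⟨le_of_eq hradius.symm, ENNReal.zero_lt_top, ?_⟩
    intro y _
    rw [zero_add]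
    have h1 : HasSum (fun k : ℕ => p (k + 1) (fun _ => y)) (f y) :=
      (hsum y).congr_fun fun k => hpP (k + 1) (Nat.le_add_left 1 k) y
    have h2 := (hasSum_nat_add_iff (f := fun n => p n (fun _ => y)) 1).mp h1
    simpa [hp0 y] using h2
  refine ⟨?_, ?_, ?_, ?_, hsum⟩
  · -- differentiability
    intro x
    have hx : x ∈ Metric.eball (0 : C(K, ℂ)) ⊤ := by
      simp [Metric.mem_eball, edist_lt_top]
    exact (hball.differentiableOn x hx).differentiableAt
      (Metric.isOpen_eball.mem_nhds hx)
  · -- bounded type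
    intro r hr
    refine ⟨∑' k : ℕ, (∫ t, ‖g (k + 1) t‖ ∂μ) * r ^ (k + 1), fun x hx => ?_⟩
    have hbound : ∀ k : ℕ, ‖P (k + 1) x‖ ≤ (∫ t, ‖g (k + 1) t‖ ∂μ) * r ^ (k + 1) := by
      intro k
      rw [← hpP (k + 1) (Nat.le_add_left 1 k) x]
      calc ‖p (k + 1) (fun _ => x)‖ ≤ ‖p (k + 1)‖ * ∏ _i : Fin (k + 1), ‖x‖ :=
            (p (k + 1)).le_opNorm _
      _ = ‖p (k + 1)‖ * ‖x‖ ^ (k + 1) := by simp [Finset.prod_const]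
      _ ≤ (∫ t, ‖g (k + 1) t‖ ∂μ) * r ^ (k + 1) :=
            mul_le_mul ((hpnorm (k + 1)).trans (le_of_eq (hGnorm k)))
              (pow_le_pow_left₀ (norm_nonneg _) hx _) (pow_nonneg (norm_nonneg _) _)
              (integral_nonneg fun t => norm_nonneg _)
    have hsn : Summable (fun k : ℕ => ‖P (k + 1) x‖) :=
      Summable.of_nonneg_of_le (fun k => norm_nonneg _) hbound (hgrowth r hr)
    calc ‖f x‖ = ‖∑' k : ℕ, P (k + 1) x‖ := by rw [(hsum x).tsum_eq]
    _ ≤ ∑' k : ℕ, ‖P (k + 1) x‖ := norm_tsum_le_tsum_norm hsn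
    _ ≤ ∑' k : ℕ, (∫ t, ‖g (k + 1) t‖ ∂μ) * r ^ (k + 1) :=
          Summable.tsum_le_tsum hbound hsn (hgrowth r hr)
  · -- homogeneous polynomial
    intro k hk
    exact ⟨p k, fun x => (hpP k hk x).symm⟩
  · -- orthogonal additivity
    intro k hk x y hxy
    have hptw : ∀ t : K, ((x + y) t) ^ k * g k t
        = (x t) ^ k * g k t + (y t) ^ k * g k t := by
      intro t
      have h0 : x t * y t = 0 := by
        have := congrFun (congrArg (fun h : C(K, ℂ) => (h : K → ℂ)) hxy) t
        simpa [ContinuousMap.mul_apply] using this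
      have hk' : k ≠ 0 := Nat.one_le_iff_ne_zero.mp hk
      rcases mul_eq_zero.mp h0 with h | h
      · rw [ContinuousMap.add_apply, h, zero_add, zero_pow hk', zero_mul, zero_add]
      · rw [ContinuousMap.add_apply, h, add_zero, zero_pow hk', zero_mul, add_zero]
    have hix : Integrable (fun t => (x t) ^ k * g k t) μ := by
      have := integrable_cm_mul μ (hgi k hk) (x ^ k)
      refine this.congr (Eventually.of_forall fun t => ?_)
      simp [ContinuousMap.pow_apply]
    have hiy : Integrable (fun t => (y t) ^ k * g k t) μ := by
      have := integrable_cm_mul μ (hgi k hk) (y ^ k)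
      refine this.congr (Eventually.of_forall fun t => ?_)
      simp [ContinuousMap.pow_apply]
    rw [hPdef, hPdef, hPdef]
    calc ∫ t, ((x + y) t) ^ k * g k t ∂μ
        = ∫ t, ((x t) ^ k * g k t + (y t) ^ k * g k t) ∂μ :=
          integral_congr_ae (Eventually.of_forall hptw)
    _ = (∫ t, (x t) ^ k * g k t ∂μ) + ∫ t, (y t) ^ k * g k t ∂μ := integral_add hix hiy
end
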